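/- arXiv:math/0407151 — 3 statements merged into one kernel-verified Lean document; each statement's English description precedes it below -/
import Mathlib

section
/- With $\gamma_k$ the geodesic parameterization as above, the unsigned angle between the tangent vectors $\gamma_k'(0)$ and $\gamma_k'(1)$ equals $\left|2\arg\left(1 + \frac{\bar{z}_k}{a_k}\right)\right|$, i.e., $\frac{\operatorname{Re}(\gamma_k'(0)\overline{\gamma_k'(1)})}{|\gamma_k'(0)||\gamma_k'(1)|} = \cos\left(2\arg\left(1 + \frac{\bar{z}_k}{a_k}\right)\right)$. -/
open Complex ComplexConjugate

lemma pos_mul_ratio (r : ℝ) (hr : 0 < r) (v : ℂ) :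
    ((r:ℂ)*v).re / ‖(r:ℂ)*v‖ = v.re / ‖v‖ := by
  rw [norm_mul, Complex.norm_real, Real.norm_eq_abs, abs_of_pos hr]
  have : ((r:ℂ)*v).re = r * v.re := by simp
  rw [this, mul_div_mul_left _ _ (ne_of_gt hr)]

lemma cos_two_arg (w : ℂ) (hw : w ≠ 0) :
    Real.cos (2 * w.arg) = (w^2).re / ‖w^2‖ := by
  have h0 : ‖w‖ ≠ 0 := norm_ne_zero_iff.mpr hw
  rw [Real.cos_two_mul, Complex.cos_arg hw, norm_pow]
  have h2 : (w^2).re = w.re^2 - w.im^2 := by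
    simp [pow_two, Complex.mul_re]
  have h3 : ‖w‖ ^ 2 = w.re^2 + w.im^2 := by
    rw [Complex.sq_norm, Complex.normSq_apply]; ring
  rw [h2]
  field_simp
  nlinarith [h3]

lemma key1 (A B : ℂ) (hA : A ≠ 0) (hB : B ≠ 0) (c : ℝ) :
    (c:ℂ)/A * conj (A * (c:ℂ) / B^2)
      = ((c^2/(Complex.normSq A * (Complex.normSq B)^2) : ℝ) : ℂ) * (conj A * B)^2 := by
  have hcA : conj A ≠ 0 := by simpa using hA
  have hcB : conj B ≠ 0 := by simpa using hB
  rw [map_div₀, map_mul, map_pow, Complex.conj_ofReal]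
  push_cast
  rw [show ((Complex.normSq A : ℝ) : ℂ) = A * conj A from (Complex.mul_conj A).symm,
      show ((Complex.normSq B : ℝ) : ℂ) = B * conj B from (Complex.mul_conj B).symm]
  field_simp

lemma key2 (A B : ℂ) (hA : A ≠ 0) :
    (B/A)^2 = ((1/(Complex.normSq A)^2 : ℝ):ℂ) * (conj A * B)^2 := by
  have hcA : conj A ≠ 0 := by simpa using hA
  push_cast
  rw [show ((Complex.normSq A : ℝ) : ℂ) = A * conj A from (Complex.mul_conj A).symm]
  field_simp

theorem stmt_9 (zk zk1 : ℂ) (hzk : ‖zk‖ < 1) (hzk1 : ‖zk1‖ < 1)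
    (hne : zk ≠ zk1) (ak : ℂ) (hak : ak = (1 - conj zk * zk1) / (zk1 - zk))
    (γ' : ℝ → ℂ) (hγ' : ∀ t, γ' t = ak * (1 - (‖zk‖ : ℂ)^2) / ((t : ℂ) * conj zk + ak)^2) :
    (γ' 0 * conj (γ' 1)).re / (‖γ' 0‖ * ‖γ' 1‖) =
      Real.cos (2 * (1 + conj zk / ak).arg) := by
  have hd : zk1 - zk ≠ 0 := sub_ne_zero.mpr (Ne.symm hne)
  have hnum : (1 : ℂ) - conj zk * zk1 ≠ 0 := by
    intro h
    have h1 : conj zk * zk1 = 1 := by linear_combination -h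
    have := congrArg (fun x : ℂ => ‖x‖) h1
    simp only [norm_mul, norm_one, Complex.norm_conj] at this
    nlinarith [norm_nonneg zk, norm_nonneg zk1]
  have hA : ak ≠ 0 := hak ▸ div_ne_zero hnum hd
  have hc : (0:ℝ) < 1 - (‖zk‖)^2 := by
    nlinarith [norm_nonneg zk]
  set c : ℝ := 1 - (‖zk‖)^2 with hcdef
  have hcC : (1 - ((‖zk‖ : ℂ))^2) = (c : ℂ) := by push_cast [hcdef]; ring
  have hzz : zk * conj zk = ((‖zk‖)^2 : ℝ) := by
    rw [← Complex.normSq_eq_norm_sq]; exact_mod_cast (Complex.mul_conj zk)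
  have hcC2 : (c : ℂ) = 1 - (((‖zk‖)^2 : ℝ) : ℂ) := by
    rw [hcdef]; push_cast; ring
  set B : ℂ := conj zk + ak with hBdef
  have hBeq : B = (c : ℂ) / (zk1 - zk) := by
    rw [hBdef, hak]
    field_simp
    linear_combination (-1 : ℂ) * hzz - hcC2
  have hB : B ≠ 0 := by
    rw [hBeq]
    exact div_ne_zero (by exact_mod_cast ne_of_gt hc) hd
  have hg0 : γ' 0 = (c:ℂ) / ak := by
    rw [hγ' 0, hcC]; push_cast; rw [zero_mul, zero_add]
    field_simp
  have hg1 : γ' 1 = ak * (c:ℂ) / B^2 := by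
    rw [hγ' 1, hcC]; push_cast; rw [one_mul]
  have hvne : (conj ak * B)^2 ≠ 0 := pow_ne_zero _ (mul_ne_zero (by simpa using hA) hB)
  have hnA : 0 < Complex.normSq ak := Complex.normSq_pos.mpr hA
  have hnB : 0 < Complex.normSq B := Complex.normSq_pos.mpr hB
  have hr : 0 < c^2 / (Complex.normSq ak * (Complex.normSq B)^2) := by positivity
  have hu : γ' 0 * conj (γ' 1)
      = ((c^2 / (Complex.normSq ak * (Complex.normSq B)^2) : ℝ) : ℂ) * (conj ak * B)^2 := by
    rw [hg0, hg1]; exact key1 ak B hA hB c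
  have habs : ‖γ' 0‖ * ‖γ' 1‖ = ‖γ' 0 * conj (γ' 1)‖ := by
    rw [norm_mul, Complex.norm_conj]
  rw [habs, hu, pos_mul_ratio _ hr _]
  have hw : (1 + conj zk / ak) = B / ak := by
    rw [hBdef]; field_simp; ring
  have hwne : (1 + conj zk / ak) ≠ 0 := by
    rw [hw]; exact div_ne_zero hB hA
  rw [cos_two_arg _ hwne, hw, key2 ak B hA, pos_mul_ratio _ (by positivity) _]
end

section
/- Let $z_k, z_{k+1}$ be in the closed unit disc with $\operatorname{Im}(\bar{z}_k z_{k+1}) \neq 0$, and let $c = \frac{(1+|z_k|^2)z_{k+1} - (1+|z_{k+1}|^2)z_k}{\bar{z}_k z_{k+1} - z_k\bar{z}_{k+1}}$. Then $\left|\frac{z_{k+1} - z_k}{2c - z_k - z_{k+1}}\right| = \left|\frac{\operatorname{Im}(\bar{z}_k z_{k+1})}{\operatorname{Re}(1 - \bar{z}_k z_{k+1})}\right|$. -/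
open Complex ComplexConjugate

theorem stmt_12 (zk zk1 c : ℂ) (hzk : ‖zk‖ ≤ 1) (hzk1 : ‖zk1‖ ≤ 1)
    (him : (conj zk * zk1).im ≠ 0)
    (hc : c = ((1 + (‖zk‖ : ℂ)^2) * zk1 - (1 + (‖zk1‖ : ℂ)^2) * zk) /
        (conj zk * zk1 - zk * conj zk1))
    (hden : 2 * c - zk - zk1 ≠ 0) (hre : (1 - conj zk * zk1).re ≠ 0) :
    ‖(zk1 - zk) / (2 * c - zk - zk1)‖ =
      |(conj zk * zk1).im / (1 - conj zk * zk1).re| := by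
  have h1 : ((‖zk‖ : ℂ))^2 = zk * conj zk := by
    rw [Complex.mul_conj, ← Complex.sq_norm]; push_cast; ring
  have h2 : ((‖zk1‖ : ℂ))^2 = zk1 * conj zk1 := by
    rw [Complex.mul_conj, ← Complex.sq_norm]; push_cast; ring
  have hconj : zk * conj zk1 = conj (conj zk * zk1) := by simp [mul_comm]
  have hd : conj zk * zk1 - zk * conj zk1 = (2 * (conj zk * zk1).im : ℝ) * I := by
    rw [hconj, Complex.sub_conj]
  have hd0 : conj zk * zk1 - zk * conj zk1 ≠ 0 := by
    rw [hd]
    exact mul_ne_zero (Complex.ofReal_ne_zero.mpr (mul_ne_zero two_ne_zero him)) Complex.I_ne_zero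
  have hA : (2 : ℂ) - conj zk * zk1 - zk * conj zk1 = ((2 * (1 - conj zk * zk1).re : ℝ) : ℂ) := by
    rw [hconj]
    apply Complex.ext <;> simp [Complex.sub_re, Complex.sub_im] <;> ring
  have hA0 : (2 : ℂ) - conj zk * zk1 - zk * conj zk1 ≠ 0 := by
    rw [hA]
    exact Complex.ofReal_ne_zero.mpr (mul_ne_zero two_ne_zero hre)
  have hkey : 2 * c - zk - zk1 =
      (zk1 - zk) * ((2 : ℂ) - conj zk * zk1 - zk * conj zk1) / (conj zk * zk1 - zk * conj zk1) := by
    rw [hc, h1, h2]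
    field_simp
    ring
  have hne : zk1 - zk ≠ 0 := by
    intro h
    have hz : zk1 = zk := by linear_combination h
    apply him
    rw [hz]
    simp [Complex.mul_im]
    ring
  have hq : (zk1 - zk) / (2 * c - zk - zk1) =
      (conj zk * zk1 - zk * conj zk1) / ((2 : ℂ) - conj zk * zk1 - zk * conj zk1) := by
    rw [hkey]
    field_simp
  rw [hq, norm_div, hd, hA, norm_mul, Complex.norm_I, mul_one, Complex.norm_real, Real.norm_eq_abs,
    Complex.norm_real, Real.norm_eq_abs, abs_div, abs_mul, abs_mul, _root_.abs_two,
    mul_div_mul_left _ _ (by norm_num : (2:ℝ) ≠ 0)]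
end

section
/- Fix $P > 0$ and $n \geq 3$, and let $S = \{(z_1, \ldots, z_n) \in D^n : \sum_{k=1}^n d(z_k, z_{k+1}) = P\}$. Then the continuous function $A(z_1, \ldots, z_n) = \sum_{k=1}^{n} 2\arctan\left(\frac{\operatorname{Im}(\bar{z}_k z_{k+1})}{\operatorname{Re}(1 - \bar{z}_k z_{k+1})}\right)$ attains its supremum on $S$. -/
open Complex ComplexConjugate

/-- Inverse hyperbolic tangent: `Tanh⁻¹ x = (1/2) ln((1+x)/(1-x))`. -/
noncomputable def artanh (x : ℝ) : ℝ := Real.log ((1 + x) / (1 - x)) / 2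

/-- Poincaré hyperbolic distance on the open unit disc. -/
noncomputable def hypDist (z w : ℂ) : ℝ :=
  2 * artanh (‖(w - z) / (1 - conj z * w)‖)

/-- Hyperbolic area of the polygon with vertices `z 0, …, z (n-1)`. -/
noncomputable def hypArea (n : ℕ) [NeZero n] (z : Fin n → ℂ) : ℝ :=
  ∑ k : Fin n, 2 * Real.arctan ((conj (z k) * z (k + 1)).im / (1 - conj (z k) * z (k + 1)).re)

noncomputable def mob (a z : ℂ) : ℂ := (z - a) / (1 - conj a * z)

lemma denom_ne {a z : ℂ} (ha : ‖a‖ < 1) (hz : ‖z‖ < 1) :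
    1 - conj a * z ≠ 0 := by
  intro h
  rw [sub_eq_zero] at h
  have : ‖conj a * z‖ < 1 := by
    rw [norm_mul, Complex.norm_conj]
    nlinarith [norm_nonneg a, norm_nonneg z]
  rw [← h] at this
  simp at this

lemma normSq_identity (a z : ℂ) :
    normSq (1 - conj a * z) - normSq (z - a) = (1 - normSq a) * (1 - normSq z) := by
  simp only [Complex.normSq_apply, Complex.sub_re, Complex.sub_im, Complex.mul_re,
    Complex.mul_im, Complex.conj_re, Complex.conj_im, Complex.one_re, Complex.one_im]
  ring

lemma mob_mem {a z : ℂ} (ha : ‖a‖ < 1) (hz : ‖z‖ < 1) :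
    ‖mob a z‖ < 1 := by
  rw [mob, norm_div, div_lt_one (norm_pos_iff.mpr (denom_ne ha hz))]
  have h2 : (‖z - a‖)^2 < (‖1 - conj a * z‖)^2 := by
    rw [Complex.sq_norm, Complex.sq_norm]
    have h3 := normSq_identity a z
    have h4 : normSq a < 1 := by rw [← Complex.sq_norm]; nlinarith [norm_nonneg a]
    have h5 : normSq z < 1 := by rw [← Complex.sq_norm]; nlinarith [norm_nonneg z]
    nlinarith
  exact lt_of_pow_lt_pow_left₀ 2 (norm_nonneg _) h2

lemma denom_ne' {a z : ℂ} (ha : ‖a‖ < 1) (hz : ‖z‖ < 1) :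
    1 - a * conj z ≠ 0 := by
  have h : 1 - a * conj z = conj (1 - conj a * z) := by
    simp [map_sub, map_mul]
  rw [h]
  rw [ne_eq, map_eq_zero]
  exact denom_ne ha hz

lemma mob_sub {a z w : ℂ} (ha : ‖a‖ < 1) (hz : ‖z‖ < 1)
    (hw : ‖w‖ < 1) :
    mob a w - mob a z = (1 - conj a * a) * (w - z) / ((1 - conj a * z) * (1 - conj a * w)) := by
  have h1 := denom_ne ha hz
  have h2 := denom_ne ha hw
  rw [mob, mob]
  rw [div_sub_div _ _ h2 h1, eq_div_iff (mul_ne_zero h1 h2), div_mul_eq_mul_div,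
    div_eq_iff (mul_ne_zero h2 h1)]
  ring

lemma one_sub_conj_mob {a z w : ℂ} (ha : ‖a‖ < 1) (hz : ‖z‖ < 1)
    (hw : ‖w‖ < 1) :
    1 - conj (mob a z) * mob a w
      = (1 - conj a * a) * (1 - conj z * w) / ((1 - a * conj z) * (1 - conj a * w)) := by
  have h1 := denom_ne ha hz
  have h2 := denom_ne ha hw
  have h3 := denom_ne' ha hz
  rw [mob, mob, map_div₀]
  simp only [map_sub, map_mul, map_one, conj_conj]
  rw [div_mul_div_comm, one_sub_div (mul_ne_zero h3 h2)]
  congr 1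
  ring

lemma mob_ratio {a z w : ℂ} (ha : ‖a‖ < 1) (hz : ‖z‖ < 1)
    (hw : ‖w‖ < 1) :
    (mob a w - mob a z) / (1 - conj (mob a z) * mob a w)
      = (w - z) / (1 - conj z * w) * ((1 - a * conj z) / (1 - conj a * z)) := by
  have h1 := denom_ne ha hz
  have h2 := denom_ne ha hw
  have h3 := denom_ne' ha hz
  have h4 := denom_ne hz hw
  have h5 := denom_ne ha ha
  rw [mob_sub ha hz hw, one_sub_conj_mob ha hz hw]
  rw [div_div_div_eq]
  field_simp

lemma abs_conj_factor {a z : ℂ} :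
    ‖1 - a * conj z‖ = ‖1 - conj a * z‖ := by
  have h : 1 - a * conj z = conj (1 - conj a * z) := by simp [map_sub, map_mul]
  rw [h, Complex.norm_conj]

lemma hypDist_mob {a z w : ℂ} (ha : ‖a‖ < 1) (hz : ‖z‖ < 1)
    (hw : ‖w‖ < 1) :
    hypDist (mob a z) (mob a w) = hypDist z w := by
  unfold hypDist
  rw [mob_ratio ha hz hw]
  simp only [norm_mul, norm_div]
  rw [abs_conj_factor, div_self (norm_ne_zero_iff.mpr (denom_ne ha hz)), mul_one]

-- re positivity
lemma re_pos {z w : ℂ} (hz : ‖z‖ < 1) (hw : ‖w‖ < 1) :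
    0 < (1 - conj z * w).re := by
  have h1 : ‖conj z * w‖ < 1 := by
    rw [norm_mul, Complex.norm_conj]
    nlinarith [norm_nonneg z, norm_nonneg w]
  have h2 := Complex.abs_re_le_norm (conj z * w)
  simp only [Complex.sub_re, Complex.one_re]
  have h3 : ((starRingEnd ℂ) z * w).re < 1 :=
    lt_of_le_of_lt (le_trans (le_abs_self _) h2) h1
  linarith

lemma arg_eq_arctan' {x : ℂ} (hx : 0 < x.re) :
    Complex.arg x = Real.arctan (x.im / x.re) := by
  have hb : |Complex.arg x| < Real.pi / 2 := Complex.abs_arg_lt_pi_div_two_iff.mpr (Or.inl hx)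
  have := abs_lt.mp hb
  rw [← Complex.tan_arg, Real.arctan_tan this.1 this.2]

lemma area_term_eq {z w : ℂ} (hz : ‖z‖ < 1) (hw : ‖w‖ < 1) :
    2 * Real.arctan ((conj z * w).im / (1 - conj z * w).re)
      = -2 * Complex.arg (1 - conj z * w) := by
  have hre := re_pos hz hw
  rw [arg_eq_arctan' hre]
  have him : (1 - conj z * w).im = -((conj z * w).im) := by simp
  rw [him, neg_div, Real.arctan_neg]
  ring

lemma re_pos' {z w : ℂ} (hz : ‖z‖ < 1) (hw : ‖w‖ < 1) :
    0 < (1 - z * conj w).re := by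
  have h : 1 - z * conj w = conj (1 - conj z * w) := by simp [map_sub, map_mul]
  rw [h, Complex.conj_re]
  exact re_pos hz hw

lemma arg_small {x : ℂ} (hx : 0 < x.re) : |Complex.arg x| < Real.pi / 2 :=
  Complex.abs_arg_lt_pi_div_two_iff.mpr (Or.inl hx)

lemma one_sub_sq (a : ℂ) : 1 - conj a * a = ((1 - Complex.normSq a : ℝ) : ℂ) := by
  push_cast
  rw [Complex.normSq_eq_conj_mul_self]

lemma arg_mob_edge {a z w : ℂ} (ha : ‖a‖ < 1) (hz : ‖z‖ < 1)
    (hw : ‖w‖ < 1) :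
    Complex.arg (1 - conj (mob a z) * mob a w)
      = Complex.arg (1 - conj z * w) - Complex.arg (1 - a * conj z)
        - Complex.arg (1 - conj a * w) := by
  have hna : (0:ℝ) < 1 - Complex.normSq a := by
    rw [← Complex.sq_norm]; nlinarith [norm_nonneg a]
  have e1 : 1 - conj (mob a z) * mob a w
      = ((1 - Complex.normSq a : ℝ) : ℂ) *
        ((1 - conj z * w) / ((1 - a * conj z) * (1 - conj a * w))) := by
    rw [one_sub_conj_mob ha hz hw, one_sub_sq]
    ring
  have hx1 : (1 - conj z * w) ≠ 0 := fun h => by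
    have := re_pos hz hw; rw [h] at this; simp at this
  have hx2 : (1 - a * conj z) ≠ 0 := denom_ne' ha hz
  have hx3 : (1 - conj a * w) ≠ 0 := denom_ne ha hw
  have e2 : Complex.arg (1 - conj (mob a z) * mob a w)
      = Complex.arg ((1 - conj z * w) / ((1 - a * conj z) * (1 - conj a * w))) := by
    rw [e1, Complex.arg_real_mul _ hna]
  -- angle-level identity
  have e3 : (Complex.arg ((1 - conj z * w) / ((1 - a * conj z) * (1 - conj a * w))) :
      Real.Angle)
      = ((Complex.arg (1 - conj z * w) - Complex.arg (1 - a * conj z)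
          - Complex.arg (1 - conj a * w) : ℝ) : Real.Angle) := by
    rw [Complex.arg_div_coe_angle hx1 (mul_ne_zero hx2 hx3),
      Complex.arg_mul_coe_angle hx2 hx3, sub_sub, Real.Angle.coe_sub, Real.Angle.coe_add]
  rw [e2]
  -- both sides small
  have b0 : |Complex.arg ((1 - conj z * w) / ((1 - a * conj z) * (1 - conj a * w)))|
      < Real.pi / 2 := by
    rw [← e2]
    exact arg_small (re_pos (mob_mem ha hz) (mob_mem ha hw))
  have b1 := arg_small (re_pos hz hw)
  have b2 := arg_small (re_pos' ha hz)
  have b3 := arg_small (re_pos ha hw)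
  rw [Real.Angle.angle_eq_iff_two_pi_dvd_sub] at e3
  obtain ⟨k, hk⟩ := e3
  have hpi := Real.pi_pos
  have habs : |(k:ℝ)| < 1 := by
    rw [abs_lt] at b0 b1 b2 b3 ⊢
    constructor <;> nlinarith [hk]
  have hk0 : k = 0 := by
    have h1 : |k| < 1 := by exact_mod_cast habs
    rw [abs_lt] at h1
    omega
  rw [hk0] at hk
  push_cast at hk
  linarith [hk]

lemma arg_conj_edge {a x : ℂ} (ha : ‖a‖ < 1) (hx : ‖x‖ < 1) :
    Complex.arg (1 - a * conj x) = - Complex.arg (1 - conj a * x) := by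
  have h : 1 - a * conj x = conj (1 - conj a * x) := by simp [map_sub, map_mul]
  rw [h, Complex.arg_conj, if_neg]
  intro hpi
  have := Complex.arg_eq_pi_iff.mp hpi
  have := re_pos ha hx
  linarith [this, Complex.arg_eq_pi_iff.mp hpi |>.1]

lemma hypArea_mob (n : ℕ) [NeZero n] (a : ℂ) (ha : ‖a‖ < 1)
    (z : Fin n → ℂ) (hz : ∀ k, ‖z k‖ < 1) :
    hypArea n (fun k => mob a (z k)) = hypArea n z := by
  unfold hypArea
  have hterm : ∀ k : Fin n,
      2 * Real.arctan ((conj (mob a (z k)) * mob a (z (k+1))).im /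
        (1 - conj (mob a (z k)) * mob a (z (k+1))).re)
      = 2 * Real.arctan ((conj (z k) * z (k+1)).im / (1 - conj (z k) * z (k+1)).re)
        + ((2 * Complex.arg (1 - conj a * z (k+1))) - (2 * Complex.arg (1 - conj a * z k))) := by
    intro k
    rw [area_term_eq (mob_mem ha (hz k)) (mob_mem ha (hz (k+1))),
        area_term_eq (hz k) (hz (k+1)), arg_mob_edge ha (hz k) (hz (k+1)),
        arg_conj_edge ha (hz k)]
    ring
  calc (∑ k : Fin n, 2 * Real.arctan ((conj ((fun k => mob a (z k)) k) *
          (fun k => mob a (z k)) (k+1)).im /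
          (1 - conj ((fun k => mob a (z k)) k) * (fun k => mob a (z k)) (k+1)).re))
      = ∑ k : Fin n,
        (2 * Real.arctan ((conj (z k) * z (k+1)).im / (1 - conj (z k) * z (k+1)).re)
        + ((2 * Complex.arg (1 - conj a * z (k+1))) - (2 * Complex.arg (1 - conj a * z k)))) := by
        refine Finset.sum_congr rfl fun k _ => ?_
        exact hterm k
    _ = ∑ k : Fin n, 2 * Real.arctan ((conj (z k) * z (k+1)).im / (1 - conj (z k) * z (k+1)).re)
        + ((∑ k : Fin n, 2 * Complex.arg (1 - conj a * z (k+1)))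
          - ∑ k : Fin n, 2 * Complex.arg (1 - conj a * z k)) := by
        rw [Finset.sum_add_distrib, Finset.sum_sub_distrib]
    _ = ∑ k : Fin n, 2 * Real.arctan ((conj (z k) * z (k+1)).im / (1 - conj (z k) * z (k+1)).re) := by
        have : ∑ k : Fin n, 2 * Complex.arg (1 - conj a * z (k+1))
            = ∑ k : Fin n, 2 * Complex.arg (1 - conj a * z k) :=
          Equiv.sum_comp (Equiv.addRight (1 : Fin n)) fun k => 2 * Complex.arg (1 - conj a * z k)
        rw [this]
        ring

lemma artanh_zero : artanh 0 = 0 := by simp [artanh]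

lemma artanh_nonneg {x : ℝ} (h0 : 0 ≤ x) (h1 : x < 1) : 0 ≤ artanh x := by
  unfold artanh
  have h2 : (1:ℝ) ≤ (1 + x) / (1 - x) := by
    rw [le_div_iff₀ (by linarith)]
    linarith
  have := Real.log_nonneg h2
  linarith

lemma artanh_le_artanh {x y : ℝ} (h0 : 0 ≤ x) (hxy : x ≤ y) (h1 : y < 1) :
    artanh x ≤ artanh y := by
  unfold artanh
  have hx1 : x < 1 := lt_of_le_of_lt hxy h1
  have h2 : (1 + x) / (1 - x) ≤ (1 + y) / (1 - y) := by
    rw [div_le_div_iff₀ (by linarith) (by linarith)]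
    nlinarith
  have h3 : (0:ℝ) < (1 + x) / (1 - x) := div_pos (by linarith) (by linarith)
  have := Real.log_le_log h3 h2
  linarith

lemma artanh_add {a b : ℝ} (ha0 : 0 ≤ a) (ha : a < 1) (hb0 : 0 ≤ b) (hb : b < 1) :
    artanh ((a + b) / (1 + a * b)) = artanh a + artanh b := by
  unfold artanh
  have hab : (0:ℝ) < 1 + a * b := by nlinarith
  have e1 : 1 + (a + b) / (1 + a * b) = ((1 + a) * (1 + b)) / (1 + a * b) := by
    field_simp
    ring
  have e2 : 1 - (a + b) / (1 + a * b) = ((1 - a) * (1 - b)) / (1 + a * b) := by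
    field_simp
    ring
  have key : (1 + (a + b) / (1 + a * b)) / (1 - (a + b) / (1 + a * b))
      = ((1 + a) / (1 - a)) * ((1 + b) / (1 - b)) := by
    rw [e1, e2]
    have h1a : (1:ℝ) - a ≠ 0 := by linarith
    have h1b : (1:ℝ) - b ≠ 0 := by linarith
    field_simp
  rw [key, Real.log_mul
    (ne_of_gt (div_pos (by linarith) (by linarith)))
    (ne_of_gt (div_pos (by linarith) (by linarith)))]
  ring

lemma mob_inv {z w : ℂ} (hz : ‖z‖ < 1) (hw : ‖w‖ < 1) :
    mob (-z) (mob z w) = w := by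
  have h1 := denom_ne hz hw
  have h2 : 1 - conj (-z) * mob z w ≠ 0 := denom_ne (by simpa using hz) (mob_mem hz hw)
  simp only [mob] at h2 ⊢
  rw [div_eq_iff h2]
  simp only [map_neg] at h2 ⊢
  field_simp at h2 ⊢
  ring

lemma mob_neg_abs_le {z u : ℂ} (hz : ‖z‖ < 1) (hu : ‖u‖ < 1) :
    ‖mob (-z) u‖
      ≤ (‖u‖ + ‖z‖) / (1 + ‖u‖ * ‖z‖) := by
  have hd : 1 - conj (-z) * u ≠ 0 := denom_ne (by simpa using hz) hu
  have hden : (0:ℝ) < 1 + ‖u‖ * ‖z‖ := by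
    have := norm_nonneg u
    have := norm_nonneg z
    nlinarith
  rw [mob, norm_div, div_le_div_iff₀ (norm_pos_iff.mpr hd) hden]
  have e1 : u - -z = u + z := by ring
  have e2 : 1 - conj (-z) * u = 1 + conj z * u := by
    simp only [map_neg]
    ring
  rw [e1, e2]
  have n1 : (‖u + z‖)^2 = normSq u + normSq z + 2 * (u * conj z).re := by
    rw [Complex.sq_norm, Complex.normSq_add]
  have n2 : (‖1 + conj z * u‖)^2
      = 1 + normSq z * normSq u + 2 * (u * conj z).re := by
    rw [Complex.sq_norm, Complex.normSq_add]
    simp [Complex.normSq_mul, Complex.mul_re]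
    ring
  have hs : |(u * conj z).re| ≤ ‖u‖ * ‖z‖ := by
    have := Complex.abs_re_le_norm (u * conj z)
    rwa [norm_mul, Complex.norm_conj] at this
  have hx : normSq u = (‖u‖)^2 := (Complex.sq_norm u).symm
  have hy : normSq z = (‖z‖)^2 := (Complex.sq_norm z).symm
  have hs1 := abs_le.mp hs
  have key : (‖u + z‖ * (1 + ‖u‖ * ‖z‖))^2
      ≤ ((‖u‖ + ‖z‖) * ‖1 + conj z * u‖)^2 := by
    have hint : 0 ≤ 2 * (‖u‖ * ‖z‖ - (u * conj z).re)
        * (1 - (‖u‖)^2) * (1 - (‖z‖)^2) := by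
      apply mul_nonneg
      apply mul_nonneg
      · linarith [hs1.2]
      · nlinarith [norm_nonneg u]
      · nlinarith [norm_nonneg z]
    rw [hx, hy] at n1 n2
    calc (‖u + z‖ * (1 + ‖u‖ * ‖z‖))^2
        = ((‖u‖)^2 + (‖z‖)^2 + 2 * (u * conj z).re)
          * (1 + ‖u‖ * ‖z‖)^2 := by rw [mul_pow, n1]
      _ ≤ ((‖u‖ + ‖z‖))^2
          * (1 + (‖z‖)^2 * (‖u‖)^2 + 2 * (u * conj z).re) := by
          nlinarith [hint]
      _ = ((‖u‖ + ‖z‖) * ‖1 + conj z * u‖)^2 := by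
          rw [mul_pow, n2]
  exact le_of_pow_le_pow_left₀ (by norm_num) (by positivity) key

lemma triangle0 {z w : ℂ} (hz : ‖z‖ < 1) (hw : ‖w‖ < 1) :
    artanh (‖w‖) ≤ artanh (‖z‖) + artanh (‖mob z w‖) := by
  set u := mob z w with hu
  have hu1 : ‖u‖ < 1 := mob_mem hz hw
  have habs : ‖w‖ ≤ (‖u‖ + ‖z‖)
      / (1 + ‖u‖ * ‖z‖) := by
    have := mob_neg_abs_le hz hu1
    rwa [mob_inv hz hw] at this
  have hlt : (‖u‖ + ‖z‖) / (1 + ‖u‖ * ‖z‖) < 1 := by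
    rw [div_lt_one (by nlinarith [norm_nonneg u, norm_nonneg z])]
    nlinarith [norm_nonneg u, norm_nonneg z]
  calc artanh (‖w‖)
      ≤ artanh ((‖u‖ + ‖z‖) / (1 + ‖u‖ * ‖z‖)) :=
        artanh_le_artanh (norm_nonneg w) habs hlt
    _ = artanh (‖u‖) + artanh (‖z‖) :=
        artanh_add (norm_nonneg u) hu1 (norm_nonneg z) hz
    _ = artanh (‖z‖) + artanh (‖u‖) := by ring

lemma contAt_artanh {x : ℝ} (h0 : -1 < x) (h1 : x < 1) : ContinuousAt artanh x := by
  have hc : ContinuousAt (fun x : ℝ => (1 + x) / (1 - x)) x := by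
    apply ContinuousAt.div
    · fun_prop
    · fun_prop
    · intro h
      simp only [sub_eq_zero] at h
      linarith [h]
  have hpos : (0:ℝ) < (1 + x) / (1 - x) := div_pos (by linarith) (by linarith)
  have hcomp : ContinuousAt (fun x : ℝ => Real.log ((1 + x) / (1 - x))) x :=
    hc.log (ne_of_gt hpos)
  unfold artanh
  exact hcomp.div_const 2

lemma contAt_sumDist {n : ℕ} [NeZero n] {z : Fin n → ℂ} (hz : ∀ k, ‖z k‖ < 1) :
    ContinuousAt (fun y : Fin n → ℂ => ∑ k : Fin n, hypDist (y k) (y (k + 1))) z := by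
  have main : Filter.Tendsto (fun y : Fin n → ℂ => ∑ k : Fin n, hypDist (y k) (y (k + 1)))
      (nhds z) (nhds (∑ k : Fin n, hypDist (z k) (z (k + 1)))) := by
    apply tendsto_finset_sum
    intro k _
    show ContinuousAt (fun y : Fin n → ℂ => hypDist (y k) (y (k + 1))) z
    have hpair : ContinuousAt (fun y : Fin n → ℂ => ((y k, y (k+1)) : ℂ × ℂ)) z :=
      ((continuous_apply k).prodMk (continuous_apply (k+1))).continuousAt
    have hd : ContinuousAt (fun p : ℂ × ℂ => hypDist p.1 p.2) (z k, z (k+1)) := by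
      have hmob : ContinuousAt (fun p : ℂ × ℂ => (p.2 - p.1) / (1 - conj p.1 * p.2))
          (z k, z (k+1)) := by
        apply ContinuousAt.div
        · exact (continuous_snd.sub continuous_fst).continuousAt
        · exact (continuous_const.sub ((Complex.continuous_conj.comp continuous_fst).mul
            continuous_snd)).continuousAt
        · exact denom_ne (hz k) (hz (k+1))
      have habs : ContinuousAt
          (fun p : ℂ × ℂ => ‖(p.2 - p.1) / (1 - conj p.1 * p.2)‖) (z k, z (k+1)) :=
        ContinuousAt.comp (x := ((z k, z (k+1)) : ℂ × ℂ)) continuous_norm.continuousAt hmob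
      have hval : ‖(z (k+1) - z k) / (1 - conj (z k) * z (k+1))‖ < 1 :=
        mob_mem (hz k) (hz (k+1))
      have hart : ContinuousAt artanh
          (‖(z (k+1) - z k) / (1 - conj (z k) * z (k+1))‖) :=
        contAt_artanh (lt_of_lt_of_le (by norm_num) (norm_nonneg _)) hval
      simp only [hypDist]
      have hcc : ContinuousAt (fun p : ℂ × ℂ =>
          artanh (‖(p.2 - p.1) / (1 - conj p.1 * p.2)‖)) (z k, z (k+1)) :=
        ContinuousAt.comp (g := artanh)
          (f := fun p : ℂ × ℂ => ‖(p.2 - p.1) / (1 - conj p.1 * p.2)‖)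
          (x := ((z k, z (k+1)) : ℂ × ℂ)) hart habs
      exact hcc.const_mul 2
    exact ContinuousAt.comp (g := fun p : ℂ × ℂ => hypDist p.1 p.2)
      (f := fun y : Fin n → ℂ => ((y k, y (k+1)) : ℂ × ℂ)) (x := z) hd hpair
  exact main

lemma contAt_hypArea {n : ℕ} [NeZero n] {z : Fin n → ℂ} (hz : ∀ k, ‖z k‖ < 1) :
    ContinuousAt (hypArea n) z := by
  have main : Filter.Tendsto (hypArea n) (nhds z) (nhds (hypArea n z)) := by
    unfold hypArea
    apply tendsto_finset_sum
    intro k _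
    show ContinuousAt (fun y : Fin n → ℂ =>
      2 * Real.arctan ((conj (y k) * y (k + 1)).im / (1 - conj (y k) * y (k + 1)).re)) z
    have hnum : ContinuousAt (fun y : Fin n → ℂ => (conj (y k) * y (k+1)).im) z :=
      (Complex.continuous_im.comp ((Complex.continuous_conj.comp (continuous_apply k)).mul
        (continuous_apply (k+1)))).continuousAt
    have hden : ContinuousAt (fun y : Fin n → ℂ => (1 - conj (y k) * y (k+1)).re) z :=
      (Complex.continuous_re.comp (continuous_const.sub
        ((Complex.continuous_conj.comp (continuous_apply k)).mul
          (continuous_apply (k+1))))).continuousAt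
    have hdiv : ContinuousAt
        (fun y : Fin n → ℂ => (conj (y k) * y (k+1)).im / (1 - conj (y k) * y (k+1)).re) z :=
      ContinuousAt.div hnum hden (ne_of_gt (re_pos (hz k) (hz (k+1))))
    have hcc : ContinuousAt (fun y : Fin n → ℂ =>
        Real.arctan ((conj (y k) * y (k+1)).im / (1 - conj (y k) * y (k+1)).re)) z :=
      ContinuousAt.comp (g := Real.arctan)
        (f := fun y : Fin n → ℂ => (conj (y k) * y (k+1)).im / (1 - conj (y k) * y (k+1)).re)
        (x := z) Real.continuous_arctan.continuousAt hdiv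
    exact hcc.const_mul 2
  exact main

lemma hypDist_eq_mob (z w : ℂ) : hypDist z w = 2 * artanh (‖mob z w‖) := rfl

lemma artanh_exp_bound {x c : ℝ} (h0 : 0 ≤ x) (h1 : x < 1) (h : artanh x ≤ c) :
    x ≤ (Real.exp (2 * c) - 1) / (Real.exp (2 * c) + 1) := by
  have hlog : Real.log ((1 + x) / (1 - x)) ≤ 2 * c := by
    unfold artanh at h; linarith
  have hpos : (0:ℝ) < (1 + x) / (1 - x) := div_pos (by linarith) (by linarith)
  have hle : (1 + x) / (1 - x) ≤ Real.exp (2 * c) := by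
    calc (1 + x) / (1 - x) = Real.exp (Real.log ((1 + x) / (1 - x))) :=
          (Real.exp_log hpos).symm
      _ ≤ Real.exp (2 * c) := Real.exp_le_exp.mpr hlog
  have hexp : (0:ℝ) < Real.exp (2 * c) := Real.exp_pos _
  rw [div_le_iff₀ (by linarith)] at hle
  rw [le_div_iff₀ (by linarith)]
  nlinarith

open Fin.NatCast in
lemma chain_bound {n : ℕ} [NeZero n] {z : Fin n → ℂ}
    (hz : ∀ k, ‖z k‖ < 1) (hz0 : z 0 = 0) (k : Fin n) :
    artanh (‖z k‖) ≤ (∑ j : Fin n, hypDist (z j) (z (j + 1))) / 2 := by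
  set t : Fin n → ℝ := fun j => artanh (‖mob (z j) (z (j + 1))‖) with ht
  have htn : ∀ j, 0 ≤ t j := fun j =>
    artanh_nonneg (norm_nonneg _) (mob_mem (hz j) (hz (j + 1)))
  have hsum : ∑ j : Fin n, hypDist (z j) (z (j + 1)) = 2 * ∑ j : Fin n, t j := by
    rw [Finset.mul_sum]
    exact Finset.sum_congr rfl fun j _ => hypDist_eq_mob _ _
  have claim : ∀ m : ℕ, m ≤ n →
      artanh (‖z (m : Fin n)‖) ≤ ∑ j ∈ Finset.range m, t ((j : ℕ) : Fin n) := by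
    intro m
    induction m with
    | zero =>
      intro _
      simp [hz0, artanh_zero]
    | succ m ih =>
      intro hm1
      have hm : m ≤ n := Nat.le_of_succ_le hm1
      have hcast : (((m + 1 : ℕ)) : Fin n) = ((m : ℕ) : Fin n) + 1 := by push_cast; ring
      rw [hcast, Finset.sum_range_succ]
      calc artanh (‖z (((m : ℕ) : Fin n) + 1)‖)
          ≤ artanh (‖z ((m : ℕ) : Fin n)‖)
            + artanh (‖mob (z ((m : ℕ) : Fin n)) (z (((m : ℕ) : Fin n) + 1))‖) :=
            triangle0 (hz _) (hz _)
        _ ≤ (∑ j ∈ Finset.range m, t ((j : ℕ) : Fin n)) + t ((m : ℕ) : Fin n) := by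
            have := ih hm
            simp only [ht]
            linarith
  have h1 := claim k.val (le_of_lt k.isLt)
  rw [Fin.cast_val_eq_self k] at h1
  have h2 : ∑ j ∈ Finset.range k.val, t ((j : ℕ) : Fin n) ≤ ∑ j : Fin n, t j := by
    have himg : ∑ j ∈ Finset.range k.val, t ((j : ℕ) : Fin n)
        = ∑ j ∈ (Finset.range k.val).image (fun j : ℕ => ((j : ℕ) : Fin n)), t j := by
      rw [Finset.sum_image]
      intro a ha b hb hab
      have ha' := Finset.mem_range.mp ha
      have hb' := Finset.mem_range.mp hb
      have hav : a < n := lt_trans ha' k.isLt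
      have hbv : b < n := lt_trans hb' k.isLt
      have := congrArg Fin.val hab
      rwa [Fin.val_cast_of_lt hav, Fin.val_cast_of_lt hbv] at this
    rw [himg]
    exact Finset.sum_le_sum_of_subset_of_nonneg (Finset.subset_univ _)
      (fun i _ _ => htn i)
  linarith [h1, h2, hsum.symm, le_trans h1 h2]

lemma exists_witness (n : ℕ) [NeZero n] (hn : 3 ≤ n) (P : ℝ) (hP : 0 < P) :
    ∃ z : Fin n → ℂ, (∀ k, ‖z k‖ < 1) ∧ z 0 = 0 ∧
      ∑ k : Fin n, hypDist (z k) (z (k + 1)) = P := by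
  obtain ⟨m, rfl⟩ : ∃ m, n = m + 3 := ⟨n - 3, by omega⟩
  set E := Real.exp (P / 2) with hE
  have hE1 : 1 < E := by
    rw [hE]
    calc (1:ℝ) = Real.exp 0 := Real.exp_zero.symm
      _ < Real.exp (P / 2) := Real.exp_lt_exp.mpr (by linarith)
  set w₀ : ℝ := (E - 1) / (E + 1) with hw₀
  have hw0pos : 0 ≤ w₀ := div_nonneg (by linarith) (by linarith)
  have hw0lt : w₀ < 1 := by
    rw [hw₀, div_lt_one (by linarith)]
    linarith
  have hart : artanh w₀ = P / 4 := by
    have hq : (1 + w₀) / (1 - w₀) = E := by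
      rw [hw₀]
      have h1 : E + 1 ≠ 0 := by linarith
      field_simp
      ring
    rw [artanh, hq, hE, Real.log_exp]
    ring
  -- the polygon
  set z : Fin (m + 3) → ℂ := fun k => if k = 1 then ((w₀ : ℝ) : ℂ) else 0 with hz
  have habs : ∀ k, ‖z k‖ < 1 := by
    intro k
    by_cases h : k = 1 <;> simp [hz, h, Complex.norm_real, Real.norm_eq_abs, _root_.abs_of_nonneg hw0pos, hw0lt]
  have h01 : (0 : Fin (m + 3)) ≠ 1 := by
    intro h
    have := congrArg Fin.val h
    simp [Fin.val_zero, Fin.val_one] at this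
  have h1 : z 0 = 0 := by simp [hz, h01]
  have habsw : ‖((w₀ : ℝ) : ℂ)‖ = w₀ := by
    rw [Complex.norm_real, Real.norm_eq_abs, _root_.abs_of_nonneg hw0pos]
  have hd0 : hypDist 0 ((w₀ : ℝ) : ℂ) = P / 2 := by
    rw [hypDist]
    simp [habsw, _root_.abs_of_nonneg hw0pos, hart]
    ring
  have hdw : hypDist ((w₀ : ℝ) : ℂ) 0 = P / 2 := by
    rw [hypDist]
    simp [habsw, _root_.abs_of_nonneg hw0pos, hart]
    ring
  have hpt : ∀ k : Fin (m + 3), hypDist (z k) (z (k + 1))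
      = (if k = 0 then P / 2 else 0) + (if k = 1 then P / 2 else 0) := by
    intro k
    by_cases hk0 : k = 0
    · subst hk0
      rw [if_pos rfl, if_neg h01, zero_add, add_zero]
      have hz1 : z 1 = ((w₀ : ℝ) : ℂ) := by simp [hz]
      rw [h1, hz1, hd0]
    · by_cases hk1 : k = 1
      · subst hk1
        rw [if_neg (Ne.symm h01), if_pos rfl, zero_add]
        have hz1 : z 1 = ((w₀ : ℝ) : ℂ) := by simp [hz]
        have h2 : (1 : Fin (m + 3)) + 1 ≠ 1 := by
          intro h
          have h' : (1 : Fin (m + 3)) + 1 = 0 + 1 := by rw [h, zero_add]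
          exact h01 (add_right_cancel h').symm
        have hz2 : z (1 + 1) = 0 := by simp [hz, h2]
        rw [hz1, hz2, hdw]
      · rw [if_neg hk0, if_neg hk1, add_zero]
        have hzk : z k = 0 := by simp [hz, hk1]
        have hk1' : k + 1 ≠ 1 := by
          intro h
          apply hk0
          have : k + 1 = 0 + 1 := by rw [h, zero_add]
          exact add_right_cancel this
        have hzk1 : z (k + 1) = 0 := by simp [hz, hk1']
        rw [hzk, hzk1, hypDist]
        simp [artanh]
  refine ⟨z, habs, h1, ?_⟩
  calc ∑ k : Fin (m + 3), hypDist (z k) (z (k + 1))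
      = ∑ k : Fin (m + 3), ((if k = 0 then P / 2 else 0) + (if k = 1 then P / 2 else 0)) :=
        Finset.sum_congr rfl fun k _ => hpt k
    _ = P := by
      rw [Finset.sum_add_distrib, Finset.sum_ite_eq' Finset.univ (0 : Fin (m+3)) fun _ => P/2,
        Finset.sum_ite_eq' Finset.univ (1 : Fin (m+3)) fun _ => P/2]
      simp

theorem stmt_18 (n : ℕ) [NeZero n] (hn : 3 ≤ n) (P : ℝ) (hP : 0 < P)
    (S : Set (Fin n → ℂ))
    (hS : S = {z | (∀ k, ‖z k‖ < 1) ∧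
      ∑ k : Fin n, hypDist (z k) (z (k + 1)) = P}) :
    ∃ r ∈ S, ∀ s ∈ S, hypArea n s ≤ hypArea n r := by
  subst hS
  set R : ℝ := (Real.exp P - 1) / (Real.exp P + 1) with hR
  have hEP : 1 < Real.exp P := by
    calc (1:ℝ) = Real.exp 0 := Real.exp_zero.symm
      _ < Real.exp P := Real.exp_lt_exp.mpr hP
  have hR0 : 0 ≤ R := div_nonneg (by linarith) (by linarith)
  have hR1 : R < 1 := by
    rw [hR, div_lt_one (by linarith)]
    linarith
  -- the bound used repeatedly
  have hbound : ∀ z : Fin n → ℂ, (∀ k, ‖z k‖ < 1) → z 0 = 0 →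
      (∑ j : Fin n, hypDist (z j) (z (j + 1))) = P → ∀ k, ‖z k‖ ≤ R := by
    intro z hz hz0 hsum k
    have h1 := chain_bound hz hz0 k
    rw [hsum] at h1
    have h2 := artanh_exp_bound (norm_nonneg _) (hz k) h1
    have h3 : 2 * (P / 2) = P := by ring
    rwa [h3] at h2
  set F : (Fin n → ℂ) → ℝ := fun z => ∑ k : Fin n, hypDist (z k) (z (k + 1)) with hF
  set C : Fin n → Set ℂ := fun k => if k = 0 then {0} else Metric.closedBall 0 R with hC
  set K : Set (Fin n → ℂ) := Set.univ.pi C with hK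
  have hKiff : ∀ y : Fin n → ℂ, y ∈ K ↔ (y 0 = 0 ∧ ∀ k, ‖y k‖ ≤ R) := by
    intro y
    constructor
    · intro hy
      have h0 := hy 0 (Set.mem_univ 0)
      rw [hC] at h0
      simp at h0
      refine ⟨h0, fun k => ?_⟩
      by_cases hk : k = 0
      · rw [hk, h0]
        simpa using hR0
      · have hk2 := hy k (Set.mem_univ k)
        rw [hC] at hk2
        simpa [hk] using hk2
    · rintro ⟨hy0, hyb⟩ k _
      rw [hC]
      by_cases hk : k = 0
      · simp [hk, hy0]
      · simpa [hk] using hyb k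
  have hKcomp : IsCompact K := by
    apply isCompact_univ_pi
    intro k
    rw [hC]
    by_cases hk : k = 0
    · simp [hk]
    · simp [hk]
      exact isCompact_closedBall 0 R
  have hKlt : ∀ y ∈ K, ∀ k, ‖y k‖ < 1 := by
    intro y hy k
    exact lt_of_le_of_lt (((hKiff y).mp hy).2 k) hR1
  -- S₁ compact
  have hS₁eq : K ∩ F ⁻¹' {P} = Subtype.val '' {x : K | F x.val = P} := by
    ext y
    simp only [Set.mem_inter_iff, Set.mem_preimage, Set.mem_singleton_iff, Set.mem_image,
      Set.mem_setOf_eq, Subtype.exists, exists_and_right, exists_eq_right]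
    constructor
    · rintro ⟨hyK, hyP⟩
      exact ⟨hyK, hyP⟩
    · rintro ⟨hyK, hyP⟩
      exact ⟨hyK, hyP⟩
  have hS₁comp : IsCompact (K ∩ F ⁻¹' {P}) := by
    rw [hS₁eq]
    haveI : CompactSpace K := isCompact_iff_compactSpace.mp hKcomp
    have hFK : ContinuousOn F K := fun y hy =>
      (contAt_sumDist (hKlt y hy)).continuousWithinAt
    have hclosed : IsClosed {x : K | F x.val = P} :=
      isClosed_eq (continuousOn_iff_continuous_restrict.mp hFK) continuous_const
    exact hclosed.isCompact.image continuous_subtype_val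
  -- nonempty
  obtain ⟨zw, hzw1, hzw0, hzwP⟩ := exists_witness n hn P hP
  have hzwK : zw ∈ K := (hKiff zw).mpr ⟨hzw0, hbound zw hzw1 hzw0 hzwP⟩
  have hS₁ne : (K ∩ F ⁻¹' {P}).Nonempty := ⟨zw, hzwK, hzwP⟩
  -- maximize
  have hareaC : ContinuousOn (hypArea n) (K ∩ F ⁻¹' {P}) := fun y hy =>
    (contAt_hypArea (hKlt y hy.1)).continuousWithinAt
  obtain ⟨r, hrmem, hrmax'⟩ := hS₁comp.exists_isMaxOn hS₁ne hareaC
  have hrmax : ∀ y ∈ K ∩ F ⁻¹' {P}, hypArea n y ≤ hypArea n r := fun y hy => hrmax' hy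
  have hrS : r ∈ {z : Fin n → ℂ | (∀ k, ‖z k‖ < 1) ∧
      ∑ k : Fin n, hypDist (z k) (z (k + 1)) = P} :=
    ⟨hKlt r hrmem.1, hrmem.2⟩
  refine ⟨r, hrS, ?_⟩
  rintro s ⟨hs1, hs2⟩
  set a : ℂ := s 0 with ha
  set s' : Fin n → ℂ := fun k => mob a (s k) with hs'
  have hs'1 : ∀ k, ‖s' k‖ < 1 := fun k => mob_mem (hs1 0) (hs1 k)
  have hs'0 : s' 0 = 0 := by
    rw [hs']
    simp [mob]
    exact Or.inl (sub_eq_zero.mpr ha.symm)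
  have hs'P : (∑ k : Fin n, hypDist (s' k) (s' (k + 1))) = P := by
    rw [← hs2]
    exact Finset.sum_congr rfl fun k _ => hypDist_mob (hs1 0) (hs1 k) (hs1 (k + 1))
  have hs'K : s' ∈ K := (hKiff s').mpr ⟨hs'0, hbound s' hs'1 hs'0 hs'P⟩
  have hs'mem : s' ∈ K ∩ F ⁻¹' {P} := ⟨hs'K, hs'P⟩
  have harea : hypArea n s' = hypArea n s := hypArea_mob n a (hs1 0) s hs1
  calc hypArea n s = hypArea n s' := harea.symm
    _ ≤ hypArea n r := hrmax s' hs'mem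
end
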